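/- Let F be Thompson's group and let X = {x_0, x_{i_1}, ..., x_{i_j}} with 1 ≤ i_1 < ... < i_j be a generating set, and Y = {x_0, x_1, x_{i_2 - i_1 + 1}, ..., x_{i_j - i_1 + 1}}. Then for every g ∈ F, |l_X(g) - l_Y(g)| ≤ 2(i_1 - 1); hence the identity map (F, d_X) → (F, d_Y) is a 2(i_1 - 1)-coarse isometry. -/

import Mathlib

variable {G : Type*} [Group G]

/-- Word length of `g` with respect to the generating set `X` (generators and inverses allowed). -/
noncomputable def wLen (X : Set G) (g : G) : ℕ :=
  sInf {n | ∃ w : List G, (∀ s ∈ w, s ∈ X ∨ s⁻¹ ∈ X) ∧ w.prod = g ∧ w.length = n}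

/-- Word metric associated to `X`. -/
noncomputable def wDist (X : Set G) (g h : G) : ℕ := wLen X (g⁻¹ * h)

lemma wLen_le (X : Set G) {w : List G} {g : G} (hw : ∀ s ∈ w, s ∈ X ∨ s⁻¹ ∈ X)
    (hp : w.prod = g) : wLen X g ≤ w.length :=
  Nat.sInf_le ⟨w, hw, hp, rfl⟩

lemma wLen_spec {X : Set G} (hX : Subgroup.closure X = ⊤) (g : G) :
    ∃ w : List G, (∀ s ∈ w, s ∈ X ∨ s⁻¹ ∈ X) ∧ w.prod = g ∧ w.length = wLen X g := by
  have hg : g ∈ (Subgroup.closure X).toSubmonoid := by rw [hX]; trivial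
  rw [Subgroup.closure_toSubmonoid] at hg
  obtain ⟨l, hl, hp⟩ := Submonoid.exists_list_of_mem_closure hg
  have hne : {n | ∃ w : List G, (∀ s ∈ w, s ∈ X ∨ s⁻¹ ∈ X) ∧ w.prod = g ∧ w.length = n}.Nonempty := by
    refine ⟨l.length, l, fun s hs => ?_, hp, rfl⟩
    rcases hl s hs with h | h
    · exact Or.inl h
    · exact Or.inr h
  obtain ⟨w, hw, hwp, hwl⟩ := Nat.sInf_mem hne
  exact ⟨w, hw, hwp, hwl⟩

lemma wLen_mul_le {X : Set G} (hX : Subgroup.closure X = ⊤) (g h : G) :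
    wLen X (g * h) ≤ wLen X g + wLen X h := by
  obtain ⟨w1, h1, hp1, hl1⟩ := wLen_spec hX g
  obtain ⟨w2, h2, hp2, hl2⟩ := wLen_spec hX h
  have : wLen X (g * h) ≤ (w1 ++ w2).length := by
    refine wLen_le X ?_ ?_
    · intro s hs; rcases List.mem_append.1 hs with hs | hs
      · exact h1 s hs
      · exact h2 s hs
    · rw [List.prod_append, hp1, hp2]
  simpa [hl1, hl2] using this

lemma wLen_pow_le {X : Set G} {s : G} (hs : s ∈ X) (k : ℕ) : wLen X (s ^ k) ≤ k := by
  have := wLen_le X (w := List.replicate k s) (g := s ^ k)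
    (fun t ht => Or.inl ((List.eq_of_mem_replicate ht) ▸ hs)) (by simp)
  simpa using this

lemma wLen_inv_pow_le {X : Set G} {s : G} (hs : s ∈ X) (k : ℕ) : wLen X ((s ^ k)⁻¹) ≤ k := by
  have := wLen_le X (w := List.replicate k s⁻¹) (g := (s ^ k)⁻¹)
    (fun t ht => Or.inr (by rw [List.eq_of_mem_replicate ht, inv_inv]; exact hs))
    (by simp [inv_pow])
  simpa using this

lemma wLen_image (φ : G ≃* G) (X : Set G) (g : G) :
    wLen (φ '' X) (φ g) = wLen X g := by
  unfold wLen
  congr 1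
  ext n
  constructor
  · rintro ⟨w, hw, hp, hl⟩
    refine ⟨w.map φ.symm, ?_, ?_, by simp [hl]⟩
    · intro s hs
      obtain ⟨t, ht, rfl⟩ := List.mem_map.1 hs
      rcases hw t ht with ⟨u, hu, hut⟩ | ⟨u, hu, hut⟩
      · left; rw [← hut]; simpa using hu
      · right; rw [← map_inv, ← hut]; simpa using hu
    · have := map_list_prod φ.symm.toMonoidHom w
      simp only [MulEquiv.coe_toMonoidHom] at this
      rw [← this, hp]; simp
  · rintro ⟨w, hw, hp, hl⟩
    refine ⟨w.map φ, ?_, ?_, by simp [hl]⟩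
    · intro s hs
      obtain ⟨t, ht, rfl⟩ := List.mem_map.1 hs
      rcases hw t ht with h | h
      · exact Or.inl ⟨t, h, rfl⟩
      · exact Or.inr ⟨t⁻¹, h, map_inv φ t⟩
    · have := map_list_prod φ.toMonoidHom w
      simp only [MulEquiv.coe_toMonoidHom] at this
      rw [← this, hp]

/-- One step in the Cayley graph of `(G, X)`. -/
def IsStep (X : Set G) (a b : G) : Prop := ∃ s, (s ∈ X ∨ s⁻¹ ∈ X) ∧ b = a * s

/-- A (nonempty) edge path in the Cayley graph, recorded as its list of vertices. -/
def IsPath (X : Set G) (p : List G) : Prop := p ≠ [] ∧ List.Chain' (IsStep X) p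

/-- The path stays in the ball of radius `n` about the identity. -/
def InBall (X : Set G) (n : ℕ) (p : List G) : Prop := ∀ a ∈ p, wLen X a ≤ n

/-- Length (number of edges) of a path given by its vertex list. -/
def pLen (p : List G) : ℕ := p.length - 1

/-- The relators of the standard infinite presentation of Thompson's group `F`. -/
def thompsonRels : Set (FreeGroup ℕ) :=
  {r | ∃ i j : ℕ, i < j ∧
    r = (FreeGroup.of i)⁻¹ * FreeGroup.of j * FreeGroup.of i * (FreeGroup.of (j + 1))⁻¹}

/-- Thompson's group `F`, presented by `⟨x_k, k ≥ 0 | x_i⁻¹ x_j x_i = x_{j+1} for i < j⟩`. -/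
abbrev ThompsonF := PresentedGroup thompsonRels

/-- The standard generators `x_n` of Thompson's group `F`. -/
def x (n : ℕ) : ThompsonF := PresentedGroup.of n

lemma x_rel {j : ℕ} (hj : 1 ≤ j) : (x 0)⁻¹ * x j * x 0 = x (j + 1) := by
  have hmem : ((FreeGroup.of 0)⁻¹ * FreeGroup.of j * FreeGroup.of 0 * (FreeGroup.of (j+1))⁻¹ :
      FreeGroup ℕ) ∈ Subgroup.normalClosure thompsonRels :=
    Subgroup.subset_normalClosure ⟨0, j, hj, rfl⟩
  have h1 : PresentedGroup.mk thompsonRels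
      ((FreeGroup.of 0)⁻¹ * FreeGroup.of j * FreeGroup.of 0 * (FreeGroup.of (j+1))⁻¹) = 1 :=
    (QuotientGroup.eq_one_iff _).2 hmem
  simp only [map_mul, map_inv] at h1
  exact mul_inv_eq_one.mp h1

lemma xconj_pow (k : ℕ) : ∀ j : ℕ, 1 ≤ j → x 0 ^ k * x (j + k) * (x 0 ^ k)⁻¹ = x j := by
  induction k with
  | zero => intro j hj; simp
  | succ k ih =>
    intro j hj
    have step : x 0 * x (j + k + 1) * (x 0)⁻¹ = x (j + k) := by
      have := x_rel (j := j + k) (by omega)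
      rw [← this]; group
    calc x 0 ^ (k+1) * x (j + (k+1)) * (x 0 ^ (k+1))⁻¹
        = x 0 ^ k * (x 0 * x (j + k + 1) * (x 0)⁻¹) * (x 0 ^ k)⁻¹ := by
          rw [pow_succ]; group
      _ = x 0 ^ k * x (j + k) * (x 0 ^ k)⁻¹ := by rw [step]
      _ = x j := ih j hj

/-- For `X = {x_0, x_{i_1}, …, x_{i_j}}` (with `1 ≤ i_1 < ⋯ < i_j`) and
`Y = {x_0, x_1, x_{i_2-i_1+1}, …, x_{i_j-i_1+1}}`, word lengths differ by at most
`2(i_1 - 1)`, so the identity map is a `2(i_1-1)`-coarse isometry of word metrics. -/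
theorem stmt18 (I : Finset ℕ) (hne : I.Nonempty) (hpos : ∀ i ∈ I, 1 ≤ i)
    (X Y : Set ThompsonF)
    (hX : X = {x 0} ∪ (fun i => x i) '' I)
    (hY : Y = {x 0} ∪ (fun i => x (i - I.min' hne + 1)) '' I)
    (hXgen : Subgroup.closure X = ⊤) (hYgen : Subgroup.closure Y = ⊤) :
    (∀ g : ThompsonF,
      |(wLen X g : ℤ) - (wLen Y g : ℤ)| ≤ 2 * ((I.min' hne : ℤ) - 1)) ∧
    (∀ g h : ThompsonF,
      |(wDist X g h : ℤ) - (wDist Y g h : ℤ)| ≤ 2 * ((I.min' hne : ℤ) - 1)) := by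
  set m := I.min' hne with hm
  have hm1 : 1 ≤ m := hpos _ (I.min'_mem hne)
  set c : ThompsonF := x 0 ^ (m - 1) with hc
  set φ : ThompsonF ≃* ThompsonF := MulAut.conj c with hφ
  have hφ_apply : ∀ g, φ g = c * g * c⁻¹ := fun g => rfl
  have hφ_symm : ∀ g, φ.symm g = c⁻¹ * g * c := fun g => rfl
  have hx0 : φ (x 0) = x 0 := by
    rw [hφ_apply]
    have : c * x 0 = x 0 * c := (Commute.self_pow (x 0) (m-1)).symm
    rw [this]; group
  have hφX : φ '' X = Y := by
    rw [hX, hY, Set.image_union, Set.image_singleton, hx0, ← Set.image_comp]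
    congr 1
    apply Set.image_congr
    intro i hi
    have him : m ≤ i := I.min'_le i hi
    have : φ (x i) = x (i - m + 1) := by
      rw [hφ_apply, hc]
      have := xconj_pow (m - 1) (i - m + 1) (by omega)
      rwa [show i - m + 1 + (m - 1) = i by omega] at this
    simpa using this
  have hkey : ∀ g : ThompsonF, wLen Y (φ g) = wLen X g := by
    intro g; rw [← hφX]; exact wLen_image φ X g
  have hcX : wLen X c ≤ m - 1 := by
    rw [hc]; exact wLen_pow_le (by rw [hX]; exact Or.inl rfl) _
  have hcX' : wLen X c⁻¹ ≤ m - 1 := by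
    rw [hc]; exact wLen_inv_pow_le (by rw [hX]; exact Or.inl rfl) _
  have hx0Y : x 0 ∈ Y := by rw [hY]; exact Or.inl rfl
  have hcY : wLen Y c ≤ m - 1 := wLen_pow_le hx0Y _
  have hcY' : wLen Y c⁻¹ ≤ m - 1 := wLen_inv_pow_le hx0Y _
  have main : ∀ g : ThompsonF,
      |(wLen X g : ℤ) - (wLen Y g : ℤ)| ≤ 2 * ((m : ℤ) - 1) := by
    intro g
    have h1 : wLen Y g ≤ wLen X g + 2 * (m - 1) := by
      have e : g = c⁻¹ * (φ g) * c := by rw [hφ_apply]; group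
      calc wLen Y g = wLen Y (c⁻¹ * (φ g) * c) := by rw [← e]
        _ ≤ wLen Y (c⁻¹ * (φ g)) + wLen Y c := wLen_mul_le hYgen _ _
        _ ≤ wLen Y c⁻¹ + wLen Y (φ g) + wLen Y c :=
            Nat.add_le_add_right (wLen_mul_le hYgen _ _) _
        _ ≤ (m - 1) + wLen X g + (m - 1) := by
            rw [hkey g]; exact add_le_add (Nat.add_le_add_right hcY' _) hcY
        _ = wLen X g + 2 * (m - 1) := by omega
    have h2 : wLen X g ≤ wLen Y g + 2 * (m - 1) := by
      have hYs : wLen X (φ.symm g) = wLen Y g := by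
        rw [← hkey (φ.symm g), φ.apply_symm_apply]
      have e : g = c * (φ.symm g) * c⁻¹ := by rw [hφ_symm]; group
      calc wLen X g = wLen X (c * (φ.symm g) * c⁻¹) := by rw [← e]
        _ ≤ wLen X (c * (φ.symm g)) + wLen X c⁻¹ := wLen_mul_le hXgen _ _
        _ ≤ wLen X c + wLen X (φ.symm g) + wLen X c⁻¹ :=
            Nat.add_le_add_right (wLen_mul_le hXgen _ _) _
        _ ≤ (m - 1) + wLen Y g + (m - 1) := by
            rw [hYs]; exact add_le_add (Nat.add_le_add_right hcX _) hcX'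
        _ = wLen Y g + 2 * (m - 1) := by omega
    rw [abs_sub_le_iff]
    constructor <;> push_cast <;> omega
  exact ⟨main, fun g h => main (g⁻¹ * h)⟩
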